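/- Apply the sequence of odd reflections at the odd roots ε_d - δ_1, ε_d - δ_2, …, ε_d - δ_n, ε_{d-1} - δ_1, …, ε_1 - δ_n (in this order) to the weight Λ₀ = ∑_{j=1}^d k_j ε_j, where at each step the weight Λ becomes Λ - α if ⟨Λ, α⟩ ≠ 0 and stays Λ if ⟨Λ, α⟩ = 0 (using ⟨ε_j,ε_k⟩ = δ_{jk}/2, ⟨δ_i,δ_l⟩ = -δ_{il}/2). If k_1 ≥ … ≥ k_d ≥ 0 are integers and a is the largest index with k_a ≥ n (a = 0 if k_1 < n), then the final weight equals ∑_{j=1}^a (k_j - n) ε_j + ∑_{j=a+1}^d ν_{k_j} + a ν_n, where ν_l = ∑_{i=1}^l δ_i (ν_0 = 0). -/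

import Mathlib

/-- A weight, as the pair of its `ε`-coefficient vector and `δ`-coefficient vector
(indexed by `ℕ`, `0`-based; only the first `d`, resp. `n`, entries are used). -/
abbrev WeightZ := (ℕ → ℤ) × (ℕ → ℤ)

/-- One odd reflection at the root `ε_j - δ_i`: the weight `Λ = ∑ c_j ε_j + ∑ s_i δ_i`
becomes `Λ - (ε_j - δ_i)` if `⟨Λ, ε_j - δ_i⟩ = (c_j + s_i)/2 ≠ 0`, and is unchanged
otherwise. -/
def oddRefl (j i : ℕ) (w : WeightZ) : WeightZ :=
  if w.1 j + w.2 i ≠ 0 then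
    (Function.update w.1 j (w.1 j - 1), Function.update w.2 i (w.2 i + 1))
  else w

/-- The sequence of odd roots `ε_d - δ_1, …, ε_d - δ_n, ε_{d-1} - δ_1, …, ε_1 - δ_n`:
`j` runs from `d` down to `1` (coded `d-1` down to `0`), and for each `j`, `i` runs
from `1` up to `n` (coded `0` up to `n-1`). -/
def reflSeq (d n : ℕ) : List (ℕ × ℕ) :=
  (List.range d).reverse.flatMap fun j => (List.range n).map fun i => (j, i)

/-! ### Auxiliary machinery -/

/-- Processing one whole "row": odd reflections at `ε_j - δ_1, …, ε_j - δ_n`. -/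
def rowStep (n : ℕ) (w : WeightZ) (j : ℕ) : WeightZ :=
  (List.range n).foldl (fun w i => oddRefl j i w) w

lemma foldl_flatMap' {α β γ : Type*} (f : γ → β → γ) (g : α → List β) (l : List α) (init : γ) :
    (l.flatMap g).foldl f init = l.foldl (fun acc j => (g j).foldl f acc) init := by
  induction l generalizing init with
  | nil => simp
  | cons a l ih => simp [List.flatMap_cons, List.foldl_append, ih]

/-- The state of the weight after partially processing one row (the first `m` of the
`n` odd reflections in the row). -/
lemma row_partial (n j : ℕ) (w : WeightZ) (c : ℤ) (hc : w.1 j = c) (hc0 : 0 ≤ c)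
    (hs0 : ∀ i, i < n → 0 ≤ w.2 i)
    (hsz : ∀ i, i < n → c ≤ (i : ℤ) → w.2 i = 0) :
    ∀ m, m ≤ n → (List.range m).foldl (fun w i => oddRefl j i w) w
      = (Function.update w.1 j (c - min c (m : ℤ)),
         fun i => w.2 i + if i < m ∧ (i : ℤ) < c then 1 else 0) := by
  intro m
  induction m with
  | zero =>
    intro _
    simp only [List.range_zero, List.foldl_nil]
    refine Prod.ext ?_ ?_
    · show w.1 = Function.update w.1 j (c - min c ((0:ℕ):ℤ))
      have h0 : c - min c ((0:ℕ):ℤ) = w.1 j := by rw [hc]; push_cast; omega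
      rw [h0, Function.update_eq_self]
    · funext i; simp
  | succ m ih =>
    intro hmn
    have hm : m ≤ n := Nat.le_of_succ_le hmn
    rw [List.range_succ, List.foldl_append, ih hm]
    simp only [List.foldl_cons, List.foldl_nil]
    rw [oddRefl]
    by_cases hcm : (m : ℤ) < c
    · have hmin : min c (m : ℤ) = (m : ℤ) := min_eq_right (le_of_lt hcm)
      have hmin' : min c ((m : ℤ) + 1) = ((m : ℤ) + 1) := min_eq_right (by omega)
      have hcond : (Function.update w.1 j (c - min c (m : ℤ))) j
          + (fun i => w.2 i + if i < m ∧ (i : ℤ) < c then 1 else 0) m ≠ 0 := by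
        simp only [Function.update_self, lt_irrefl, false_and, if_false, add_zero]
        have := hs0 m (lt_of_lt_of_le (Nat.lt_succ_self m) hmn)
        omega
      rw [if_pos hcond]
      refine Prod.ext ?_ ?_
      · simp only [Function.update_self, Function.update_idem]
        exact congrArg (Function.update w.1 j) (by push_cast; omega)
      · funext i
        simp only
        by_cases hi : i = m
        · subst hi
          simp only [Function.update_self, lt_irrefl, false_and, if_false, add_zero,
            if_pos (⟨Nat.lt_succ_self i, hcm⟩ : i < i + 1 ∧ (i : ℤ) < c)]
        · rw [Function.update_of_ne hi]
          have heq : (i < m ∧ (i : ℤ) < c) ↔ (i < m + 1 ∧ (i : ℤ) < c) := by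
            constructor <;> (rintro ⟨h, h'⟩; exact ⟨by omega, h'⟩)
          simp only [heq]
    · -- no reflection happens
      push_neg at hcm
      have hmin : min c (m : ℤ) = c := min_eq_left hcm
      have hmin' : min c ((m : ℤ) + 1) = c := min_eq_left (by omega)
      have hsm : w.2 m = 0 := hsz m (lt_of_lt_of_le (Nat.lt_succ_self m) hmn) hcm
      have hcond : ¬ ((Function.update w.1 j (c - min c (m : ℤ))) j
          + (fun i => w.2 i + if i < m ∧ (i : ℤ) < c then 1 else 0) m ≠ 0) := by
        simp only [Function.update_self, lt_irrefl, false_and, if_false, add_zero,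
          hmin, hsm, sub_self, zero_add, ne_eq, not_not]
      rw [if_neg hcond]
      refine Prod.ext ?_ ?_
      · simp only [hmin]
        rw [show ((m + 1 : ℕ) : ℤ) = (m : ℤ) + 1 by push_cast; ring, hmin']
      · funext i
        simp only
        have heq : (i < m ∧ (i : ℤ) < c) ↔ (i < m + 1 ∧ (i : ℤ) < c) := by
          constructor
          · rintro ⟨h, h'⟩; exact ⟨by omega, h'⟩
          · rintro ⟨h, h'⟩; exact ⟨by omega, h'⟩
        simp only [heq]

/-- The invariant state: the weight after processing rows `d-1, d-2, …, t`. -/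
def Wfun (d n : ℕ) (k : ℕ → ℤ) (t : ℕ) : WeightZ :=
  (fun j => if j < t then k j else if j < d then k j - min (k j) (n : ℤ) else 0,
   fun i => if i < n then ((((Finset.Ico t d).filter fun j => (i : ℤ) + 1 ≤ k j).card : ℤ)) else 0)

theorem stmt15 (d n a : ℕ) (k : ℕ → ℤ)
    (hdec : ∀ j, j + 1 < d → k (j + 1) ≤ k j)
    (hnonneg : ∀ j, j < d → 0 ≤ k j)
    (ha : a ≤ d)
    (ha1 : ∀ j, j < a → (n : ℤ) ≤ k j)
    (ha2 : ∀ j, a ≤ j → j < d → k j < (n : ℤ)) :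
    (reflSeq d n).foldl (fun w p => oddRefl p.1 p.2 w)
        ((fun j => if j < d then k j else 0, fun _ => 0) : WeightZ)
      = ((fun j => if j < a then k j - n else 0),
         (fun i => if i < n then
            (a : ℤ) + ((Finset.Ico a d).filter fun j => (i : ℤ) + 1 ≤ k j).card
          else 0)) := by
  classical
  -- monotonicity of k on [0, d)
  have hmono : ∀ j j', j ≤ j' → j' < d → k j' ≤ k j := by
    intro j j' hle hlt
    induction j' with
    | zero => simp [Nat.le_zero.mp hle]
    | succ m ih =>
      rcases eq_or_lt_of_le hle with rfl | h
      · exact le_refl _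
      · calc k (m + 1) ≤ k m := hdec m hlt
          _ ≤ k j := ih (Nat.lt_succ_iff.mp h) (by omega)
  -- one full row step, applied to the invariant state
  have hrow : ∀ t, t < d → rowStep n (Wfun d n k (t + 1)) t = Wfun d n k t := by
    intro t htd
    have hc : (Wfun d n k (t + 1)).1 t = k t := by
      simp [Wfun, Nat.lt_succ_self]
    have hc0 : 0 ≤ k t := hnonneg t htd
    have hs0 : ∀ i, i < n → 0 ≤ (Wfun d n k (t + 1)).2 i := by
      intro i hi
      simp only [Wfun, if_pos hi]
      positivity
    have hsz : ∀ i, i < n → k t ≤ (i : ℤ) → (Wfun d n k (t + 1)).2 i = 0 := by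
      intro i hi hki
      simp only [Wfun, if_pos hi]
      norm_cast
      rw [Finset.card_eq_zero, Finset.filter_eq_empty_iff]
      intro j hj
      simp only [Finset.mem_Ico] at hj
      have : k j ≤ k t := hmono t j (by omega) hj.2
      omega
    rw [rowStep, row_partial n t _ (k t) hc hc0 hs0 hsz n (le_refl n)]
    refine Prod.ext ?_ ?_
    · funext j
      simp only
      by_cases hjt : j = t
      · subst hjt
        simp only [Function.update_self, Wfun]
        rw [if_neg (lt_irrefl j), if_pos htd]
      · rw [Function.update_of_ne hjt]
        simp only [Wfun]
        by_cases hj1 : j < t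
        · rw [if_pos (by omega : j < t + 1), if_pos hj1]
        · rw [if_neg (by omega : ¬ j < t + 1), if_neg hj1]
    · funext i
      simp only
      by_cases hi : i < n
      · simp only [Wfun, if_pos hi]
        have hins : Finset.Ico t d = insert t (Finset.Ico (t + 1) d) :=
          (Finset.insert_Ico_add_one_left_eq_Ico htd).symm
        rw [hins, Finset.filter_insert]
        by_cases hik : (i : ℤ) + 1 ≤ k t
        · rw [if_pos hik, Finset.card_insert_of_notMem (by simp),
            if_pos (⟨hi, by omega⟩ : i < n ∧ (i : ℤ) < k t)]
          push_cast; ring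
        · rw [if_neg hik, if_neg (by omega : ¬ (i < n ∧ (i : ℤ) < k t))]
          ring
      · simp only [Wfun, if_neg hi]
        rw [if_neg (by omega : ¬ (i < n ∧ (i : ℤ) < k t))]
        ring
  -- the outer induction over rows
  have houter : ∀ m, m ≤ d →
      ((List.range' (d - m) m).reverse).foldl (rowStep n) (Wfun d n k d)
        = Wfun d n k (d - m) := by
    intro m
    induction m with
    | zero => intro _; simp
    | succ m ih =>
      intro hmd
      have hmd' : m ≤ d := Nat.le_of_succ_le hmd
      have ht : d - (m + 1) + 1 = d - m := by omega
      rw [List.range'_succ, List.reverse_cons, List.foldl_append, ht, ih hmd']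
      simp only [List.foldl_cons, List.foldl_nil]
      rw [← ht]
      exact hrow (d - (m + 1)) (by omega)
  -- putting things together
  have hinit : ((fun j => if j < d then k j else 0, fun _ => 0) : WeightZ)
      = Wfun d n k d := by
    refine Prod.ext ?_ ?_
    · funext j
      simp only [Wfun]
      by_cases hj : j < d
      · rw [if_pos hj, if_pos hj]
      · rw [if_neg hj, if_neg hj, if_neg hj]
    · funext i
      simp [Wfun]
  have hfold : (reflSeq d n).foldl (fun w p => oddRefl p.1 p.2 w)
        ((fun j => if j < d then k j else 0, fun _ => 0) : WeightZ)
      = ((List.range d).reverse).foldl (rowStep n)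
          ((fun j => if j < d then k j else 0, fun _ => 0) : WeightZ) := by
    rw [reflSeq, foldl_flatMap']
    congr 1
    funext w j
    simp [rowStep, List.foldl_map]
  rw [hfold, hinit, List.range_eq_range']
  have hfin := houter d (le_refl d)
  rw [Nat.sub_self] at hfin
  rw [hfin]
  -- finally, identify `Wfun d n k 0` with the stated answer
  refine Prod.ext ?_ ?_
  · funext j
    simp only [Wfun]
    rw [if_neg (Nat.not_lt_zero j)]
    by_cases hja : j < a
    · have hjd : j < d := lt_of_lt_of_le hja ha
      rw [if_pos hjd, if_pos hja, min_eq_right (ha1 j hja)]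
    · rw [if_neg hja]
      by_cases hjd : j < d
      · rw [if_pos hjd, min_eq_left (le_of_lt (ha2 j (by omega) hjd))]
        ring
      · rw [if_neg hjd]
  · funext i
    by_cases hi : i < n
    · simp only [Wfun, if_pos hi]
      have hsplit : Finset.Ico 0 a ∪ Finset.Ico a d = Finset.Ico 0 d :=
        Finset.Ico_union_Ico_eq_Ico (Nat.zero_le a) ha
      rw [← hsplit, Finset.filter_union,
        Finset.card_union_of_disjoint
          (Finset.disjoint_filter_filter (Finset.Ico_disjoint_Ico_consecutive 0 a d))]
      have hfull : (Finset.Ico 0 a).filter (fun j => (i : ℤ) + 1 ≤ k j)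
          = Finset.Ico 0 a := by
        rw [Finset.filter_eq_self]
        intro j hj
        simp only [Finset.mem_Ico] at hj
        have := ha1 j hj.2
        omega
      rw [hfull, Nat.card_Ico, Nat.sub_zero]
      push_cast; ring
    · simp only [Wfun, if_neg hi]
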